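/- Let σ > 0, B > 0, β ≥ 0, and let x_1, …, x_n ∈ ℝ^d and x'_1, …, x'_n ∈ ℝ^d satisfy ‖x_i‖_2 ≤ B and ‖x'_i‖_2 ≤ B for all i, x'_i = x_i for all i ≤ n−1, and ‖x_n − x'_n‖_2 ≤ β. Let H^cts and H^cts' be the continuous quadratic NTK matrices of (x_i) and (x'_i), respectively, i.e., H^cts_{ij} = E_{w ~ N(0, σ²I_d)}[⟨w, x_i⟩⟨w, x_j⟩⟨x_i, x_j⟩] and similarly for H^cts' with the primed data. Then ‖H^cts − H^cts'‖_F ≤ σ²B³β · √(8n + 8). -/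

import Mathlib

open MeasureTheory ProbabilityTheory

/-- Euclidean inner product on `Fin d → ℝ`. -/
def ip {d : ℕ} (u v : Fin d → ℝ) : ℝ := ∑ s, u s * v s

/-- Euclidean norm on `Fin d → ℝ`. -/
noncomputable def l2 {d : ℕ} (u : Fin d → ℝ) : ℝ := Real.sqrt (∑ s, u s ^ 2)

/-- The Gaussian measure `N(0, σ² I_d)` on `Fin d → ℝ`: the `d`-fold product of `N(0, σ²)`. -/
noncomputable def gaussPi (d : ℕ) (σ : ℝ) : Measure (Fin d → ℝ) :=
  Measure.pi fun _ => gaussianReal 0 (σ ^ 2).toNNReal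

/-- Continuous quadratic NTK matrix of the data `x`. -/
noncomputable def ntkCts {d n : ℕ} (σ : ℝ) (x : Fin n → Fin d → ℝ) :
    Matrix (Fin n) (Fin n) ℝ := fun i j =>
  ∫ w, ip w (x i) * ip w (x j) * ip (x i) (x j) ∂gaussPi d σ

/-- Frobenius norm of a real matrix. -/
noncomputable def frobNorm {n : ℕ} (A : Matrix (Fin n) (Fin n) ℝ) : ℝ :=
  Real.sqrt (∑ i, ∑ j, A i j ^ 2)

section Aux

open Real
open scoped NNReal ENNReal



section OneDim

lemma pdf_eq (v : ℝ≥0) (x : ℝ) :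
    gaussianPDFReal 0 v x
      = (Real.sqrt (2 * π * v))⁻¹ * Real.exp (-((2 * (v : ℝ))⁻¹) * x ^ 2) := by
  rw [gaussianPDFReal]
  have h : -(x - 0) ^ 2 / (2 * (v : ℝ)) = -((2 * (v : ℝ))⁻¹) * x ^ 2 := by ring
  rw [h]

lemma integrable_x_exp {b : ℝ} (hb : 0 < b) :
    Integrable (fun x : ℝ => x * Real.exp (-b * x ^ 2)) :=
  integrable_mul_exp_neg_mul_sq hb

lemma integrable_x2_exp {b : ℝ} (hb : 0 < b) :
    Integrable (fun x : ℝ => x ^ 2 * Real.exp (-b * x ^ 2)) := by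
  have h := integrable_rpow_mul_exp_neg_mul_sq hb (s := 2) (by norm_num)
  have heq : (fun x : ℝ => x ^ (2 : ℝ) * Real.exp (-b * x ^ 2))
      = fun x : ℝ => x ^ 2 * Real.exp (-b * x ^ 2) := by
    funext x
    rw [show (2:ℝ) = ((2:ℕ):ℝ) by norm_num, Real.rpow_natCast]
  rwa [heq] at h

lemma integral_x_exp {b : ℝ} (hb : 0 < b) :
    ∫ x : ℝ, x * Real.exp (-b * x ^ 2) = 0 := by
  have h := MeasureTheory.integral_neg_eq_self (μ := (volume : Measure ℝ))
    (fun x : ℝ => x * Real.exp (-b * x ^ 2))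
  have h2 : ∫ x : ℝ, -(x * Real.exp (-b * x ^ 2)) = ∫ x : ℝ, x * Real.exp (-b * x ^ 2) := by
    simpa [neg_mul, neg_sq] using h
  rw [integral_neg] at h2
  ring_nf at h2 ⊢
  have h3 : ∫ a : ℝ, a * Real.exp (-(a ^ 2 * b)) = ∫ x : ℝ, x * Real.exp (-(b * x ^ 2)) := by
    congr 1; funext x; ring_nf
  linarith

lemma integral_x2_exp {b : ℝ} (hb : 0 < b) :
    ∫ x : ℝ, x ^ 2 * Real.exp (-b * x ^ 2) = b ^ (-(3:ℝ)/2) * Real.sqrt π / 2 := by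
  have habs : ∫ x : ℝ, x ^ 2 * Real.exp (-b * x ^ 2)
      = ∫ x : ℝ, |x| ^ 2 * Real.exp (-b * |x| ^ 2) := by
    congr 1; funext x; rw [sq_abs]
  have h2 : ∫ x : ℝ, |x| ^ 2 * Real.exp (-b * |x| ^ 2)
      = 2 * ∫ x in Set.Ioi (0:ℝ), x ^ 2 * Real.exp (-b * x ^ 2) :=
    integral_comp_abs (f := fun x : ℝ => x ^ 2 * Real.exp (-b * x ^ 2))
  have h3 : ∫ x in Set.Ioi (0:ℝ), x ^ (2:ℝ) * Real.exp (-b * x ^ (2:ℝ))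
      = b ^ (-((2:ℝ) + 1) / 2) * (1 / 2) * Real.Gamma (((2:ℝ) + 1) / 2) :=
    integral_rpow_mul_exp_neg_mul_rpow (by norm_num) (by norm_num) hb
  have hrw : (fun x : ℝ => x ^ (2:ℝ) * Real.exp (-b * x ^ (2:ℝ)))
      = fun x : ℝ => x ^ 2 * Real.exp (-b * x ^ 2) := by
    funext x
    rw [show (2:ℝ) = ((2:ℕ):ℝ) by norm_num, Real.rpow_natCast]
  rw [hrw] at h3
  have hGamma : Real.Gamma (((2:ℝ) + 1) / 2) = Real.sqrt π / 2 := by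
    have he : ((2:ℝ) + 1) / 2 = 1/2 + 1 := by norm_num
    rw [he, Real.Gamma_add_one (by norm_num), Real.Gamma_one_half_eq]
    ring
  rw [habs, h2, h3, hGamma]
  have he2 : -((2:ℝ) + 1) / 2 = -(3:ℝ)/2 := by norm_num
  rw [he2]
  ring

end OneDim


section GaussMoments

variable {v : ℝ≥0}

lemma vpos (hv : v ≠ 0) : 0 < (v : ℝ) := by
  exact_mod_cast pos_iff_ne_zero.mpr hv

lemma bpos (hv : v ≠ 0) : 0 < (2 * (v : ℝ))⁻¹ := by
  have := vpos hv; positivity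

lemma gauss_integral_eq (hv : v ≠ 0) (g : ℝ → ℝ) :
    ∫ x, g x ∂gaussianReal 0 v = ∫ x, gaussianPDFReal 0 v x * g x := by
  rw [gaussianReal_of_var_ne_zero 0 hv]
  have hm : Measurable fun x => (gaussianPDFReal 0 v x).toNNReal :=
    (measurable_gaussianPDFReal 0 v).real_toNNReal
  have hd : gaussianPDF 0 v = fun x => ((gaussianPDFReal 0 v x).toNNReal : ℝ≥0∞) := rfl
  rw [hd, integral_withDensity_eq_integral_smul hm]
  congr 1
  funext x
  rw [NNReal.smul_def, smul_eq_mul, Real.coe_toNNReal _ (gaussianPDFReal_nonneg 0 v x)]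

lemma gauss_integrable_iff (hv : v ≠ 0) (g : ℝ → ℝ) :
    Integrable g (gaussianReal 0 v) ↔
      Integrable (fun x => gaussianPDFReal 0 v x * g x) volume := by
  rw [gaussianReal_of_var_ne_zero 0 hv]
  have hm : Measurable fun x => (gaussianPDFReal 0 v x).toNNReal :=
    (measurable_gaussianPDFReal 0 v).real_toNNReal
  have hd : gaussianPDF 0 v = fun x => ((gaussianPDFReal 0 v x).toNNReal : ℝ≥0∞) := rfl
  rw [hd, integrable_withDensity_iff_integrable_smul hm]
  constructor <;> intro h <;> refine h.congr ?_ <;> filter_upwards with x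
  · rw [NNReal.smul_def, smul_eq_mul, Real.coe_toNNReal _ (gaussianPDFReal_nonneg 0 v x)]
  · rw [NNReal.smul_def, smul_eq_mul, Real.coe_toNNReal _ (gaussianPDFReal_nonneg 0 v x)]

lemma integrable_id_gauss (hv : v ≠ 0) : Integrable (fun x => x) (gaussianReal 0 v) := by
  rw [gauss_integrable_iff hv]
  have h := (integrable_x_exp (bpos hv)).const_mul (Real.sqrt (2 * π * v))⁻¹
  refine h.congr ?_
  filter_upwards with x
  rw [pdf_eq]; ring

lemma integrable_sq_gauss (hv : v ≠ 0) : Integrable (fun x => x ^ 2) (gaussianReal 0 v) := by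
  rw [gauss_integrable_iff hv]
  have h := (integrable_x2_exp (bpos hv)).const_mul (Real.sqrt (2 * π * v))⁻¹
  refine h.congr ?_
  filter_upwards with x
  rw [pdf_eq]; ring

lemma integral_id_gauss (hv : v ≠ 0) : ∫ x, x ∂gaussianReal 0 v = 0 := by
  rw [gauss_integral_eq hv]
  have heq : (fun x => gaussianPDFReal 0 v x * x)
      = fun x => (Real.sqrt (2 * π * v))⁻¹ * (x * Real.exp (-((2 * (v:ℝ))⁻¹) * x ^ 2)) := by
    funext x; rw [pdf_eq]; ring
  rw [heq, integral_const_mul, integral_x_exp (bpos hv), mul_zero]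

lemma integral_sq_gauss (hv : v ≠ 0) : ∫ x, x ^ 2 ∂gaussianReal 0 v = (v : ℝ) := by
  rw [gauss_integral_eq hv]
  have heq : (fun x => gaussianPDFReal 0 v x * x ^ 2)
      = fun x => (Real.sqrt (2 * π * v))⁻¹ * (x ^ 2 * Real.exp (-((2 * (v:ℝ))⁻¹) * x ^ 2)) := by
    funext x; rw [pdf_eq]; ring
  rw [heq, integral_const_mul, integral_x2_exp (bpos hv)]
  -- algebra: (√(2πv))⁻¹ * (((2v)⁻¹) ^ (-3/2) * √π / 2) = v
  have hv' : 0 < (v : ℝ) := vpos hv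
  have h2v : (0:ℝ) < 2 * v := by linarith
  have hb : ((2 * (v:ℝ))⁻¹) ^ (-(3:ℝ)/2) = (2 * (v:ℝ)) ^ ((3:ℝ)/2) := by
    rw [Real.inv_rpow h2v.le, ← Real.rpow_neg h2v.le]
    norm_num
  rw [hb]
  have hsplit : (2 * (v:ℝ)) ^ ((3:ℝ)/2) = (2 * (v:ℝ)) * Real.sqrt (2 * (v:ℝ)) := by
    have : ((3:ℝ)/2) = 1 + 1/2 := by norm_num
    rw [this, Real.rpow_add h2v, Real.rpow_one, ← Real.sqrt_eq_rpow]
  have hsqrt : Real.sqrt (2 * π * v) = Real.sqrt π * Real.sqrt (2 * (v:ℝ)) := by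
    rw [← Real.sqrt_mul Real.pi_pos.le]
    congr 1; ring
  rw [hsplit, hsqrt]
  have h1 : Real.sqrt π ≠ 0 := by positivity
  have h2 : Real.sqrt (2 * (v:ℝ)) ≠ 0 := by positivity
  have h3 : Real.sqrt (2 * (v:ℝ)) * Real.sqrt (2 * (v:ℝ)) = 2 * (v:ℝ) :=
    Real.mul_self_sqrt h2v.le
  field_simp

end GaussMoments


lemma my_integrable_pi_prod : ∀ {m : ℕ} (μ : Measure ℝ) [SigmaFinite μ]
    (f : Fin m → ℝ → ℝ), (∀ i, Integrable (f i) μ) →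
    Integrable (fun w : Fin m → ℝ => ∏ i, f i (w i)) (Measure.pi fun _ => μ) := by
  intro m
  induction m with
  | zero =>
      intro μ _ f hf
      simp only [Finset.univ_eq_empty, Finset.prod_empty]
      rw [Measure.pi_of_empty]
      exact integrable_const _
  | succ m ih =>
      intro μ _ f hf
      have h := ((measurePreserving_piFinSuccAbove (fun _ : Fin (m+1) => μ) 0).symm)
      rw [← h.integrable_comp_emb (MeasurableEquiv.measurableEmbedding _)]
      simp_rw [MeasurableEquiv.piFinSuccAbove_symm_apply, Fin.insertNthEquiv,
        Fin.prod_univ_succ, Fin.insertNth_zero]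
      simp only [Fin.zero_succAbove, Function.comp_def, Fin.cons_zero, Fin.cons_succ,
        Equiv.coe_fn_mk]
      have h2 : Integrable (fun x : Fin m → ℝ => ∏ j, f (Fin.succ j) (x j))
          (Measure.pi fun _ => μ) := ih μ _ (fun i => hf _)
      exact Integrable.mul_prod (hf 0) h2

lemma my_integral_pi_prod : ∀ {m : ℕ} (μ : Measure ℝ) [SigmaFinite μ]
    (f : Fin m → ℝ → ℝ),
    ∫ w : Fin m → ℝ, ∏ i, f i (w i) ∂(Measure.pi fun _ => μ) = ∏ i, ∫ x, f i x ∂μ := by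
  intro m
  induction m with
  | zero =>
      intro μ _ f
      simp only [Finset.univ_eq_empty, Finset.prod_empty]
      rw [Measure.pi_of_empty]
      simp
  | succ m ih =>
      intro μ _ f
      calc
        _ = ∫ z : ℝ × (Fin m → ℝ),
            f 0 z.1 * ∏ i : Fin m, f (Fin.succ i) (z.2 i)
              ∂(μ.prod (Measure.pi fun _ : Fin m => μ)) := by
          rw [← ((measurePreserving_piFinSuccAbove
            (fun _ : Fin (m+1) => μ) 0).symm).integral_comp']
          simp only [MeasurableEquiv.piFinSuccAbove_symm_apply, Fin.insertNthEquiv,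
            Fin.prod_univ_succ, Fin.insertNth_zero, Equiv.coe_fn_mk, Fin.cons_succ,
            Fin.zero_succAbove, Fin.cons_zero, cast_eq]
        _ = (∫ x, f 0 x ∂μ) * ∏ i : Fin m, ∫ x, f (Fin.succ i) x ∂μ := by
          rw [← ih μ (fun i => f (Fin.succ i)), ← integral_prod_mul]
        _ = ∏ i, ∫ x, f i x ∂μ := by rw [Fin.prod_univ_succ]


section Coord

variable {d : ℕ} {v : ℝ≥0}

/-- coordinate factor functions -/
def cf (s t k : Fin d) : ℝ → ℝ := fun x => (if k = s then x else 1) * (if k = t then x else 1)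

lemma prod_cf (s t : Fin d) (w : Fin d → ℝ) : (∏ k, cf s t k (w k)) = w s * w t := by
  unfold cf
  rw [Finset.prod_mul_distrib]
  congr 1 <;> simp

lemma integrable_cf (hv : v ≠ 0) (s t k : Fin d) : Integrable (cf s t k) (gaussianReal 0 v) := by
  unfold cf
  by_cases hs : k = s
  · by_cases ht : k = t
    · subst hs; subst ht
      simp only [if_pos rfl]
      exact (integrable_sq_gauss hv).congr (by filter_upwards with x; simp [pow_two])
    · subst hs
      simp only [if_pos rfl, if_neg ht, mul_one]
      exact integrable_id_gauss hv
  · by_cases ht : k = t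
    · subst ht
      simp only [if_neg hs, if_pos rfl, one_mul]
      exact integrable_id_gauss hv
    · simp only [if_neg hs, if_neg ht, mul_one]
      exact integrable_const _

lemma integral_cf (hv : v ≠ 0) (s t k : Fin d) :
    ∫ x, cf s t k x ∂gaussianReal 0 v
      = if k = s then (if k = t then (v:ℝ) else 0) else (if k = t then 0 else 1) := by
  unfold cf
  by_cases hs : k = s
  · by_cases ht : k = t
    · subst hs; subst ht
      simp only [if_pos rfl]
      rw [← integral_sq_gauss hv]
      congr 1; funext x; simp [pow_two]
    · subst hs
      simp only [if_pos rfl, if_neg ht, mul_one]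
      exact integral_id_gauss hv
  · by_cases ht : k = t
    · subst ht
      simp only [if_neg hs, if_pos rfl, one_mul]
      exact integral_id_gauss hv
    · simp only [if_neg hs, if_neg ht, mul_one]
      simp

lemma integrable_coord_mul (hv : v ≠ 0) (s t : Fin d) :
    Integrable (fun w : Fin d → ℝ => w s * w t) (Measure.pi fun _ => gaussianReal 0 v) := by
  have h := my_integrable_pi_prod (gaussianReal 0 v) (cf s t) (integrable_cf hv s t)
  exact h.congr (by filter_upwards with w; exact prod_cf s t w)

lemma integral_coord_mul (hv : v ≠ 0) (s t : Fin d) :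
    ∫ w : Fin d → ℝ, w s * w t ∂(Measure.pi fun _ => gaussianReal 0 v)
      = if s = t then (v:ℝ) else 0 := by
  have h1 : (fun w : Fin d → ℝ => w s * w t) = fun w => ∏ k, cf s t k (w k) := by
    funext w; rw [prod_cf]
  rw [h1, my_integral_pi_prod (gaussianReal 0 v) (cf s t)]
  by_cases hst : s = t
  · subst hst
    simp only [if_pos rfl]
    have : ∀ k, (∫ x, cf s s k x ∂gaussianReal 0 v) = if k = s then (v:ℝ) else 1 := by
      intro k
      rw [integral_cf hv]
      by_cases h : k = s <;> simp [h]
    simp_rw [this]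
    simp
  · rw [if_neg hst]
    apply Finset.prod_eq_zero (Finset.mem_univ s)
    rw [integral_cf hv]
    simp [hst]

lemma integral_ip_mul (hv : v ≠ 0) (u u' : Fin d → ℝ) :
    ∫ w : Fin d → ℝ, ip w u * ip w u' ∂(Measure.pi fun _ => gaussianReal 0 v)
      = (v : ℝ) * ip u u' := by
  have hexp : (fun w : Fin d → ℝ => ip w u * ip w u')
      = fun w => ∑ s, ∑ t, (u s * u' t) * (w s * w t) := by
    funext w
    unfold ip
    rw [Finset.sum_mul_sum]
    congr 1; funext s; congr 1; funext t; ring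
  rw [hexp]
  rw [integral_finset_sum _ (fun s _ => integrable_finset_sum _
    (fun t _ => (integrable_coord_mul hv s t).const_mul (u s * u' t)))]
  have : ∀ s, (∫ w : Fin d → ℝ, ∑ t, (u s * u' t) * (w s * w t)
      ∂(Measure.pi fun _ => gaussianReal 0 v)) = u s * u' s * v := by
    intro s
    rw [integral_finset_sum _ (fun t _ => (integrable_coord_mul hv s t).const_mul (u s * u' t))]
    have h2 : ∀ t, (∫ w : Fin d → ℝ, (u s * u' t) * (w s * w t)
        ∂(Measure.pi fun _ => gaussianReal 0 v)) = (u s * u' t) * if s = t then (v:ℝ) else 0 := by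
      intro t
      rw [integral_const_mul, integral_coord_mul hv]
    simp_rw [h2, mul_ite, mul_zero]
    simp
  simp_rw [this]
  unfold ip
  rw [Finset.mul_sum]
  congr 1; funext s; ring
end Coord


section Det

variable {d : ℕ}

lemma l2_nonneg (u : Fin d → ℝ) : 0 ≤ l2 u := Real.sqrt_nonneg _

lemma l2_zero_self (u : Fin d → ℝ) : l2 (u - u) = 0 := by
  simp [l2]

lemma abs_ip_le (u w : Fin d → ℝ) : |ip u w| ≤ l2 u * l2 w := by
  have h := Finset.sum_mul_sq_le_sq_mul_sq Finset.univ u w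
  unfold ip l2
  rw [← Real.sqrt_sq_eq_abs, ← Real.sqrt_mul (by positivity)]
  exact Real.sqrt_le_sqrt h

lemma ip_sub_left (u u' w : Fin d → ℝ) : ip (u - u') w = ip u w - ip u' w := by
  unfold ip
  rw [← Finset.sum_sub_distrib]
  congr 1; funext s; simp [sub_mul]

lemma ip_sub_right (u w w' : Fin d → ℝ) : ip u (w - w') = ip u w - ip u w' := by
  unfold ip
  rw [← Finset.sum_sub_distrib]
  congr 1; funext s; simp [mul_sub]

lemma sq_ip_diff_bound {B : ℝ} (hB : 0 ≤ B) (u u' w w' : Fin d → ℝ)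
    (hu : l2 u ≤ B) (hu' : l2 u' ≤ B) (hw : l2 w ≤ B) (hw' : l2 w' ≤ B) :
    |ip u w ^ 2 - ip u' w' ^ 2|
      ≤ 2 * B ^ 2 * (B * l2 (u - u') + B * l2 (w - w')) := by
  have hdiff : ip u w - ip u' w' = ip (u - u') w + ip u' (w - w') := by
    rw [ip_sub_left, ip_sub_right]; ring
  have n1 : 0 ≤ l2 (u - u') := l2_nonneg _
  have n2 : 0 ≤ l2 (w - w') := l2_nonneg _
  have nu : 0 ≤ l2 u := l2_nonneg _
  have nu' : 0 ≤ l2 u' := l2_nonneg _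
  have nw : 0 ≤ l2 w := l2_nonneg _
  have nw' : 0 ≤ l2 w' := l2_nonneg _
  have a1 := abs_ip_le (u - u') w
  have a2 := abs_ip_le u' (w - w')
  have h1 : |ip u w - ip u' w'| ≤ B * l2 (u - u') + B * l2 (w - w') := by
    rw [hdiff]
    refine (abs_add_le _ _).trans ?_
    have b1 : l2 (u - u') * l2 w ≤ l2 (u - u') * B := by
      exact mul_le_mul_of_nonneg_left hw n1
    have b2 : l2 u' * l2 (w - w') ≤ B * l2 (w - w') := by
      exact mul_le_mul_of_nonneg_right hu' n2
    nlinarith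
  have h2 : |ip u w + ip u' w'| ≤ 2 * B ^ 2 := by
    refine (abs_add_le _ _).trans ?_
    have a3 := abs_ip_le u w
    have a4 := abs_ip_le u' w'
    nlinarith
  calc |ip u w ^ 2 - ip u' w' ^ 2|
      = |ip u w - ip u' w'| * |ip u w + ip u' w'| := by
        rw [← abs_mul]; congr 1; ring
    _ ≤ (B * l2 (u - u') + B * l2 (w - w')) * (2 * B ^ 2) := by
        refine mul_le_mul h1 h2 (abs_nonneg _) ?_
        nlinarith
    _ = 2 * B ^ 2 * (B * l2 (u - u') + B * l2 (w - w')) := by ring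

end Det

lemma ntk_entry {d n : ℕ} {σ : ℝ} (hσ : 0 < σ) (x : Fin n → Fin d → ℝ) (i j : Fin n) :
    ntkCts σ x i j = σ ^ 2 * (ip (x i) (x j)) ^ 2 := by
  have hv : (σ ^ 2).toNNReal ≠ 0 := by
    refine ne_of_gt ?_
    rw [← NNReal.coe_lt_coe, Real.coe_toNNReal _ (sq_nonneg σ)]
    positivity
  have hco : (((σ ^ 2).toNNReal : ℝ)) = σ ^ 2 := Real.coe_toNNReal _ (sq_nonneg σ)
  show (∫ w, ip w (x i) * ip w (x j) * ip (x i) (x j) ∂gaussPi d σ) = _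
  rw [show gaussPi d σ = Measure.pi fun _ => gaussianReal 0 (σ ^ 2).toNNReal from rfl]
  rw [integral_mul_const, integral_ip_mul hv, hco]
  ring


end Aux

/-- sensitivity of the continuous quadratic NTK under a β-close
neighboring dataset (here with `n + 1` data points, differing only in the last one). -/
theorem ntk_cts_sensitivity {d n : ℕ} (σ B β : ℝ) (hσ : 0 < σ) (hB : 0 < B) (hβ : 0 ≤ β)
    (x x' : Fin (n + 1) → Fin d → ℝ)
    (hx : ∀ i, l2 (x i) ≤ B) (hx' : ∀ i, l2 (x' i) ≤ B)
    (heq : ∀ i, i ≠ Fin.last n → x' i = x i)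
    (hclose : l2 (x (Fin.last n) - x' (Fin.last n)) ≤ β) :
    frobNorm (ntkCts σ x - ntkCts σ x') ≤
      σ ^ 2 * B ^ 3 * β * Real.sqrt (8 * (n + 1) + 8) := by
  set A := ntkCts σ x - ntkCts σ x' with hAdef
  set c := σ ^ 2 * B ^ 3 * β with hcdef
  have hc : 0 ≤ c := by positivity
  have hA : ∀ i j, A i j = σ ^ 2 * ((ip (x i) (x j)) ^ 2 - (ip (x' i) (x' j)) ^ 2) := by
    intro i j
    have : A i j = ntkCts σ x i j - ntkCts σ x' i j := by
      rw [hAdef]; simp [Matrix.sub_apply]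
    rw [this, ntk_entry hσ, ntk_entry hσ]; ring
  have hzero : ∀ i j, i ≠ Fin.last n → j ≠ Fin.last n → A i j = 0 := by
    intro i j hi hj
    rw [hA, heq i hi, heq j hj, sub_self, mul_zero]
  -- uniform bound
  set e : Fin (n + 1) → ℝ := fun i => if i = Fin.last n then β else 0 with hedef
  have he : ∀ i, l2 (x i - x' i) ≤ e i := by
    intro i
    by_cases hi : i = Fin.last n
    · subst hi; simpa [hedef] using hclose
    · rw [hedef]; simp only [if_neg hi]
      rw [heq i hi, l2_zero_self]
  have henn : ∀ i, 0 ≤ e i := by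
    intro i; rw [hedef]
    by_cases hi : i = Fin.last n <;> simp [hi, hβ]
  have habs : ∀ i j, |A i j| ≤ 2 * σ ^ 2 * B ^ 3 * (e i + e j) := by
    intro i j
    have h1 : |A i j| ≤ σ ^ 2 * (2 * B ^ 2 * (B * l2 (x i - x' i) + B * l2 (x j - x' j))) := by
      rw [hA, abs_mul, abs_of_nonneg (sq_nonneg σ)]
      exact mul_le_mul_of_nonneg_left
        (sq_ip_diff_bound hB.le (x i) (x' i) (x j) (x' j) (hx i) (hx' i) (hx j) (hx' j))
        (sq_nonneg σ)
    refine h1.trans ?_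
    have h2 : σ ^ 2 * (2 * B ^ 2 * (B * l2 (x i - x' i) + B * l2 (x j - x' j)))
        ≤ σ ^ 2 * (2 * B ^ 2 * (B * e i + B * e j)) := by
      gcongr
      · exact he i
      · exact he j
    refine h2.trans (le_of_eq ?_); ring
  have hsq : ∀ i j, A i j ^ 2 ≤ (2 * σ ^ 2 * B ^ 3 * (e i + e j)) ^ 2 := by
    intro i j
    rw [← sq_abs (A i j)]
    have hnn : (0:ℝ) ≤ 2 * σ ^ 2 * B ^ 3 * (e i + e j) := by
      have := henn i; have := henn j; positivity
    exact pow_le_pow_left₀ (abs_nonneg _) (habs i j) 2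
  have hrow : ∀ j, j ≠ Fin.last n → A (Fin.last n) j ^ 2 ≤ 4 * c ^ 2 := by
    intro j hj
    have h := hsq (Fin.last n) j
    rw [hedef] at h
    simp only [if_pos rfl, if_true, if_neg hj] at h
    refine h.trans (le_of_eq ?_)
    rw [hcdef]; ring
  have hcol : ∀ i, i ≠ Fin.last n → A i (Fin.last n) ^ 2 ≤ 4 * c ^ 2 := by
    intro i hi
    have h := hsq i (Fin.last n)
    rw [hedef] at h
    simp only [if_pos rfl, if_true, if_neg hi] at h
    refine h.trans (le_of_eq ?_)
    rw [hcdef]; ring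
  have hcorner : A (Fin.last n) (Fin.last n) ^ 2 ≤ 16 * c ^ 2 := by
    have h := hsq (Fin.last n) (Fin.last n)
    rw [hedef] at h
    simp only [if_pos rfl, if_true] at h
    refine h.trans (le_of_eq ?_)
    rw [hcdef]; ring
  -- sum bound
  have hS : (∑ i, ∑ j, A i j ^ 2) ≤ (8 * (n:ℝ) + 16) * c ^ 2 := by
    rw [Fin.sum_univ_castSucc (f := fun i => ∑ j, A i j ^ 2)]
    have hterm1 : ∀ i : Fin n, (∑ j, A i.castSucc j ^ 2) ≤ 4 * c ^ 2 := by
      intro i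
      rw [Fin.sum_univ_castSucc (f := fun j => A i.castSucc j ^ 2)]
      have hz : (∑ j : Fin n, A i.castSucc j.castSucc ^ 2) = 0 := by
        apply Finset.sum_eq_zero
        intro j _
        rw [hzero _ _ (Fin.castSucc_lt_last i).ne (Fin.castSucc_lt_last j).ne]
        ring
      rw [hz, zero_add]
      exact hcol _ (Fin.castSucc_lt_last i).ne
    have hterm2 : (∑ j, A (Fin.last n) j ^ 2) ≤ (n:ℝ) * (4 * c ^ 2) + 16 * c ^ 2 := by
      rw [Fin.sum_univ_castSucc (f := fun j => A (Fin.last n) j ^ 2)]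
      have h1 : (∑ j : Fin n, A (Fin.last n) j.castSucc ^ 2) ≤ (n:ℝ) * (4 * c ^ 2) := by
        calc (∑ j : Fin n, A (Fin.last n) j.castSucc ^ 2)
            ≤ ∑ _j : Fin n, 4 * c ^ 2 :=
              Finset.sum_le_sum (fun j _ => hrow _ (Fin.castSucc_lt_last j).ne)
          _ = (n:ℝ) * (4 * c ^ 2) := by simp [mul_comm]
      linarith [hcorner]
    have h1 : (∑ i : Fin n, ∑ j, A i.castSucc j ^ 2) ≤ (n:ℝ) * (4 * c ^ 2) := by
      calc (∑ i : Fin n, ∑ j, A i.castSucc j ^ 2)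
          ≤ ∑ _i : Fin n, 4 * c ^ 2 := Finset.sum_le_sum (fun i _ => hterm1 i)
        _ = (n:ℝ) * (4 * c ^ 2) := by simp [mul_comm]
    linarith
  -- conclude
  unfold frobNorm
  have hle : Real.sqrt (∑ i, ∑ j, A i j ^ 2) ≤ Real.sqrt ((8 * (n:ℝ) + 16) * c ^ 2) :=
    Real.sqrt_le_sqrt hS
  refine hle.trans ?_
  have h8 : (0:ℝ) ≤ 8 * (n:ℝ) + 16 := by positivity
  rw [Real.sqrt_mul h8, Real.sqrt_sq hc]
  have harg : 8 * ((n:ℝ) + 1) + 8 = 8 * (n:ℝ) + 16 := by ring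
  rw [mul_comm, hcdef]
  push_cast
  rw [harg]
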